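/- Well-definedness of the h-gradient: let h : ℝ^m → ℝ be a differentiable convex function, let D ⊆ ℝ^m be a convex set, and let P₁, P₂ ∈ D both be minimizers of h over D (h(P₁) = h(P₂) ≤ h(P) for all P ∈ D). Then the derivatives of h at the two points coincide: ∇h(P₁) = ∇h(P₂). -/

import Mathlib

open InnerProductSpace

section Aux

variable {m : ℕ}

private lemma hasDerivAt_comp_line (f : EuclideanSpace ℝ (Fin m) → ℝ)
    (hf : Differentiable ℝ f) (a w : EuclideanSpace ℝ (Fin m)) (t : ℝ) :
    HasDerivAt (fun s : ℝ => f (a + s • w)) (fderiv ℝ f (a + t • w) w) t := by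
  have hL : HasDerivAt (fun s : ℝ => a + s • w) w t := by
    simpa using ((hasDerivAt_id t).smul_const w).const_add a
  exact (hf (a + t • w)).hasFDerivAt.comp_hasDerivAt t hL

private lemma convexOn_line (f : EuclideanSpace ℝ (Fin m) → ℝ)
    (hf : ConvexOn ℝ Set.univ f) (a w : EuclideanSpace ℝ (Fin m)) :
    ConvexOn ℝ Set.univ (fun s : ℝ => f (a + s • w)) := by
  have h := hf.comp_affineMap (AffineMap.lineMap a (a + w))
  have he : ∀ s : ℝ, (f ∘ (AffineMap.lineMap a (a + w))) s = f (a + s • w) := by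
    intro s
    simp [AffineMap.lineMap_apply, add_comm]
  simpa [Set.preimage_univ] using h.congr (fun s _ => he s)

/-- A critical point of a differentiable convex function on all of space is a global min. -/
private lemma isMin_of_fderiv_zero (f : EuclideanSpace ℝ (Fin m) → ℝ)
    (hf : Differentiable ℝ f) (hconv : ConvexOn ℝ Set.univ f)
    (a : EuclideanSpace ℝ (Fin m)) (ha : fderiv ℝ f a = 0)
    (y : EuclideanSpace ℝ (Fin m)) : f a ≤ f y := by
  set w := y - a with hw
  have hψ := convexOn_line f hconv a w
  have hd : HasDerivAt (fun s : ℝ => f (a + s • w)) 0 0 := by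
    have := hasDerivAt_comp_line f hf a w 0
    simpa [ha] using this
  have hslope := hψ.le_slope_of_hasDerivAt (Set.mem_univ (0 : ℝ))
    (Set.mem_univ (1 : ℝ)) one_pos hd
  rw [slope_def_field] at hslope
  have h1 : a + (1 : ℝ) • w = y := by
    rw [one_smul, hw]; abel
  have h0 : a + (0 : ℝ) • w = a := by simp
  rw [h1, h0] at hslope
  have : (0 : ℝ) ≤ f y - f a := by
    have := hslope
    field_simp at this
    linarith
  linarith

end Aux

/-- **Well-definedness of the h-gradient.** If a differentiable convex function `h` attains its
minimum over a convex set `D` at two points `P₁, P₂ ∈ D`, then the gradients of `h` at these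
two points coincide. -/
theorem h_gradient_well_defined {m : ℕ}
    (h : EuclideanSpace ℝ (Fin m) → ℝ) (hh_diff : Differentiable ℝ h)
    (hh_conv : ConvexOn ℝ Set.univ h)
    (D : Set (EuclideanSpace ℝ (Fin m))) (hD_conv : Convex ℝ D)
    (P₁ P₂ : EuclideanSpace ℝ (Fin m)) (hP₁ : P₁ ∈ D) (hP₂ : P₂ ∈ D)
    (heq : h P₁ = h P₂) (hmin₁ : ∀ P ∈ D, h P₁ ≤ h P) :
    gradient h P₁ = gradient h P₂ := by
  classical
  set g₁ : EuclideanSpace ℝ (Fin m) := gradient h P₁ with hg₁def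
  set v : EuclideanSpace ℝ (Fin m) := P₂ - P₁ with hvdef
  have hcomb_pt : ∀ t : ℝ, P₁ + t • v = (1 - t) • P₁ + t • P₂ := by
    intro t
    rw [hvdef, smul_sub, sub_smul, one_smul]
    abel
  -- h is constant on the segment [P₁, P₂]
  have hseg : ∀ t : ℝ, t ∈ Set.Icc (0 : ℝ) 1 → h (P₁ + t • v) = h P₁ := by
    intro t ht
    have hmem : P₁ + t • v ∈ D := by
      rw [hcomb_pt]
      exact hD_conv hP₁ hP₂ (by linarith [ht.2]) ht.1 (by ring)
    have h1 : h P₁ ≤ h (P₁ + t • v) := hmin₁ _ hmem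
    have hc : h ((1 - t) • P₁ + t • P₂) ≤ (1 - t) * h P₁ + t * h P₂ :=
      hh_conv.2 (Set.mem_univ P₁) (Set.mem_univ P₂)
        (by linarith [ht.2]) ht.1 (by ring)
    have h2 : h (P₁ + t • v) ≤ h P₁ := by
      rw [hcomb_pt]
      calc h ((1 - t) • P₁ + t • P₂) ≤ (1 - t) * h P₁ + t * h P₂ := hc
        _ = h P₁ := by rw [← heq]; ring
    linarith
  set ψ : ℝ → ℝ := fun s : ℝ => h (P₁ + s • v) with hψdef
  have hψconv : ConvexOn ℝ Set.univ ψ := convexOn_line h hh_conv P₁ v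
  have hψ0 : ψ 0 = h P₁ := hseg 0 ⟨le_refl 0, zero_le_one⟩
  have hψ1 : ψ 1 = h P₁ := hseg 1 ⟨zero_le_one, le_refl 1⟩
  -- for t < 0 as well, the value is ≥ h P₁ (by convexity on the line)
  have hneg : ∀ t : ℝ, t < 0 → h P₁ ≤ ψ t := by
    intro t ht
    have hden : (0 : ℝ) < 1 - t := by linarith
    have hab : 1 / (1 - t) + -t / (1 - t) = 1 := by
      field_simp
      linarith
    have hc : ψ ((1 / (1 - t)) • t + (-t / (1 - t)) • (1 : ℝ)) ≤
        (1 / (1 - t)) • ψ t + (-t / (1 - t)) • ψ 1 :=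
      hψconv.2 (Set.mem_univ t) (Set.mem_univ (1 : ℝ))
        (by positivity) (div_nonneg (by linarith) (by linarith)) hab
    have hcomb0 : (1 / (1 - t)) • t + (-t / (1 - t)) • (1 : ℝ) = 0 := by
      simp only [smul_eq_mul]
      field_simp
      ring
    rw [hcomb0, hψ0, hψ1] at hc
    simp only [smul_eq_mul] at hc
    have hA : (0:ℝ) < 1 / (1 - t) := by positivity
    have hmul := mul_le_mul_of_nonneg_left hc (le_of_lt hden)
    rw [mul_add] at hmul
    have e1 : (1 - t) * (1 / (1 - t) * ψ t) = ψ t := by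
      field_simp
    have e2 : (1 - t) * (-t / (1 - t) * h P₁) = -t * h P₁ := by
      field_simp
    rw [e1, e2] at hmul
    nlinarith [hmul]
  -- 0 is a local min of ψ, hence the directional derivative vanishes
  have hlocmin : IsLocalMin ψ 0 := by
    have hIoo : Set.Ioo (-1 : ℝ) 1 ∈ nhds (0 : ℝ) := Ioo_mem_nhds (by norm_num) (by norm_num)
    refine Filter.eventually_iff_exists_mem.mpr ⟨Set.Ioo (-1 : ℝ) 1, hIoo, ?_⟩
    intro t htmem
    rcases lt_or_ge t 0 with htneg | htpos
    · rw [hψ0]; exact hneg t htneg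
    · rw [hψ0]
      have := hseg t ⟨htpos, le_of_lt htmem.2⟩
      rw [show ψ t = h (P₁ + t • v) from rfl, this]
  have hderiv0 : fderiv ℝ h P₁ v = 0 := by
    have hd : HasDerivAt ψ (fderiv ℝ h (P₁ + (0:ℝ) • v) v) 0 :=
      hasDerivAt_comp_line h hh_diff P₁ v 0
    rw [show P₁ + (0 : ℝ) • v = P₁ by simp] at hd
    have hz := hlocmin.deriv_eq_zero
    rwa [hd.deriv] at hz
  -- fderiv h P₁ = innerSL g₁
  have hfd₁ : fderiv ℝ h P₁ = innerSL ℝ g₁ := by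
    have h2 : toDual ℝ (EuclideanSpace ℝ (Fin m)) g₁ = fderiv ℝ h P₁ := by
      rw [hg₁def, gradient, LinearIsometryEquiv.apply_symm_apply]
    rw [← h2]
    ext x
    simp [toDual_apply_apply, innerSL_apply_apply]
  have hinner_v : inner (𝕜 := ℝ) g₁ v = (0 : ℝ) := by
    have : (innerSL ℝ g₁) v = 0 := by rw [← hfd₁]; exact hderiv0
    simpa [innerSL_apply_apply] using this
  -- define φ = h - ⟪g₁, ·⟫
  set φ : EuclideanSpace ℝ (Fin m) → ℝ := fun x => h x - (innerSL ℝ g₁) x with hφdef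
  have hφdiff : Differentiable ℝ φ := hh_diff.sub (innerSL ℝ g₁).differentiable
  have hφconv : ConvexOn ℝ Set.univ φ := by
    have hlin : ConvexOn ℝ Set.univ (fun x : EuclideanSpace ℝ (Fin m) =>
        (-(innerSL ℝ g₁)) x) :=
      (-(innerSL ℝ g₁) : EuclideanSpace ℝ (Fin m) →L[ℝ] ℝ).toLinearMap.convexOn convex_univ
    have hsum := hh_conv.add hlin
    refine hsum.congr (fun x _ => ?_)
    simp only [hφdef, Pi.add_apply, ContinuousLinearMap.neg_apply, sub_eq_add_neg]
  have hφfderiv : ∀ x, fderiv ℝ φ x = fderiv ℝ h x - innerSL ℝ g₁ := fun x =>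
    ((hh_diff x).hasFDerivAt.sub (innerSL ℝ g₁).hasFDerivAt).fderiv
  have hφP₁ : fderiv ℝ φ P₁ = 0 := by
    rw [hφfderiv, hfd₁, sub_self]
  -- P₁ is a global min of φ
  have hφmin : ∀ y, φ P₁ ≤ φ y := isMin_of_fderiv_zero φ hφdiff hφconv P₁ hφP₁
  -- φ P₂ = φ P₁
  have hφeq : φ P₂ = φ P₁ := by
    have hinn : inner (𝕜 := ℝ) g₁ P₂ - inner (𝕜 := ℝ) g₁ P₁ = (0 : ℝ) := by
      rw [← inner_sub_right]; exact hinner_v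
    simp only [hφdef, innerSL_apply_apply]
    rw [← heq]
    linarith
  -- hence P₂ is a global min of φ, so fderiv φ P₂ = 0
  have hlocmin₂ : IsLocalMin φ P₂ := by
    refine Filter.Eventually.of_forall (fun x => ?_)
    rw [hφeq]; exact hφmin x
  have hφP₂ : fderiv ℝ φ P₂ = 0 := hlocmin₂.fderiv_eq_zero
  have hfd₂ : fderiv ℝ h P₂ = innerSL ℝ g₁ := by
    have hz := hφfderiv P₂
    rw [hφP₂] at hz
    exact sub_eq_zero.mp hz.symm
  -- conclude
  have hfin : gradient h P₂ = g₁ := by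
    rw [gradient, hfd₂]
    have h2 : (innerSL ℝ g₁ : EuclideanSpace ℝ (Fin m) →L[ℝ] ℝ) =
        toDual ℝ (EuclideanSpace ℝ (Fin m)) g₁ := by
      ext x; simp [toDual_apply_apply, innerSL_apply_apply]
    rw [h2, LinearIsometryEquiv.symm_apply_apply]
  rw [hfin]
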